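/- Let k ≥ 2 and let y ∈ ℝ be a root of H_{k−1}. Then y is not a root of H_k, and Σ_{x ∈ roots(H_k)} 1/(x − y)² = k, where the sum runs over the k roots of H_k. -/

import Mathlib

open Polynomial

noncomputable def hermiteR (k : ℕ) : Polynomial ℝ :=
  (Polynomial.hermite k).map (Int.castRingHom ℝ)

lemma hermiteR_succ (n : ℕ) :
    hermiteR (n + 1) = X * hermiteR n - derivative (hermiteR n) := by
  simp [hermiteR, Polynomial.hermite_succ, Polynomial.derivative_map]

lemma hermiteR_zero : hermiteR 0 = 1 := by
  simp [hermiteR, Polynomial.hermite_zero]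

lemma hermiteR_monic (n : ℕ) : (hermiteR n).Monic :=
  (Polynomial.hermite_monic n).map _

lemma hermiteR_natDegree (n : ℕ) : (hermiteR n).natDegree = n := by
  rw [hermiteR, Polynomial.natDegree_map_eq_of_injective Int.cast_injective]
  exact Polynomial.natDegree_hermite

lemma hermiteR_ne_zero (n : ℕ) : hermiteR n ≠ 0 := (hermiteR_monic n).ne_zero

lemma derivative_hermiteR (n : ℕ) :
    derivative (hermiteR (n + 1)) = C ((n : ℝ) + 1) * hermiteR n := by
  induction n with
  | zero => simp [hermiteR_succ, hermiteR_zero]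
  | succ m ih =>
    rw [hermiteR_succ (m+1)]
    rw [Polynomial.derivative_sub, Polynomial.derivative_mul, Polynomial.derivative_X, ih]
    rw [hermiteR_succ m]
    push_cast
    simp only [Polynomial.derivative_mul, Polynomial.derivative_sub, ih,
      Polynomial.derivative_C, Polynomial.derivative_X, Polynomial.C_add, Polynomial.C_1,
      Polynomial.derivative_add, Polynomial.derivative_one]
    ring

lemma hermiteR_eval_succ (n : ℕ) (x : ℝ) :
    (hermiteR (n + 1)).eval x =
      x * (hermiteR n).eval x - (derivative (hermiteR n)).eval x := by
  rw [hermiteR_succ]; simp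

lemma hermiteR_no_common_root : ∀ n : ℕ, ∀ x : ℝ,
    (hermiteR (n + 1)).eval x = 0 → (hermiteR n).eval x = 0 → False := by
  intro n
  induction n with
  | zero => intro x _ h0; rw [hermiteR_zero] at h0; simp at h0
  | succ m ih =>
    intro x h2 h1
    have hd : (derivative (hermiteR (m + 1))).eval x = ((m : ℝ) + 1) * (hermiteR m).eval x := by
      rw [derivative_hermiteR]; simp
    have := hermiteR_eval_succ (m + 1) x
    rw [h2, h1, hd] at this
    have hm : (hermiteR m).eval x = 0 := by
      have hne : ((m : ℝ) + 1) ≠ 0 := by positivity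
      have this2 : ((m:ℝ)+1) * eval x (hermiteR m) = 0 := by field_simp at this; linarith
      rcases mul_eq_zero.1 this2 with h | h
      · exact absurd h hne
      · linarith [h]
    exact ih x h1 hm

noncomputable def gaussH (n : ℕ) (x : ℝ) : ℝ :=
  (hermiteR n).eval x * Real.exp (-(x ^ 2) / 2)

lemma hasDerivAt_gaussH (n : ℕ) (x : ℝ) :
    HasDerivAt (gaussH n) (-(gaussH (n + 1) x)) x := by
  have h1 : HasDerivAt (fun x : ℝ => (hermiteR n).eval x)
      ((derivative (hermiteR n)).eval x) x := (hermiteR n).hasDerivAt x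
  have h0 : HasDerivAt (fun x : ℝ => -(x ^ 2) / 2) (-x) x := by
    have := ((hasDerivAt_pow 2 x).neg.div_const 2)
    refine this.congr_deriv ?_
    ring
  have h2 : HasDerivAt (fun x : ℝ => Real.exp (-(x ^ 2) / 2))
      (Real.exp (-(x ^ 2) / 2) * (-x)) x := h0.exp
  have := h1.mul h2
  refine this.congr_deriv ?_
  simp only [gaussH, hermiteR_eval_succ]
  ring

lemma gaussH_tendsto_atTop (n : ℕ) : Filter.Tendsto (gaussH n) Filter.atTop (nhds 0) := by
  have hg : Filter.Tendsto (fun x => |(hermiteR n).eval x / Real.exp x|)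
      Filter.atTop (nhds 0) := by
    simpa using (Polynomial.tendsto_div_exp_atTop (hermiteR n)).abs
  apply squeeze_zero_norm' ?_ hg
  filter_upwards [Filter.eventually_ge_atTop (2 : ℝ)] with x hx
  have hx2 : x ≤ x ^ 2 / 2 := by nlinarith
  have h3 : Real.exp (-(x ^ 2) / 2) ≤ (Real.exp x)⁻¹ := by
    rw [neg_div, Real.exp_neg]
    exact inv_anti₀ (Real.exp_pos x) (Real.exp_le_exp.2 hx2)
  rw [Real.norm_eq_abs, gaussH, abs_mul, abs_of_pos (Real.exp_pos _), abs_div,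
    abs_of_pos (Real.exp_pos _), div_eq_mul_inv]
  exact mul_le_mul_of_nonneg_left h3 (abs_nonneg _)

lemma gaussH_tendsto_atBot (n : ℕ) : Filter.Tendsto (gaussH n) Filter.atBot (nhds 0) := by
  have key : Filter.Tendsto (fun x => gaussH n (-x)) Filter.atTop (nhds 0) := by
    have : (fun x => gaussH n (-x)) =
        fun x => ((hermiteR n).comp (-X)).eval x * Real.exp (-(x ^ 2) / 2) := by
      funext x; simp [gaussH, Polynomial.eval_comp]
    rw [this]
    have hg : Filter.Tendsto (fun x => |((hermiteR n).comp (-X)).eval x / Real.exp x|)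
        Filter.atTop (nhds 0) := by
      simpa using (Polynomial.tendsto_div_exp_atTop ((hermiteR n).comp (-X))).abs
    apply squeeze_zero_norm' ?_ hg
    filter_upwards [Filter.eventually_ge_atTop (2 : ℝ)] with x hx
    have hx2 : x ≤ x ^ 2 / 2 := by nlinarith
    have h3 : Real.exp (-(x ^ 2) / 2) ≤ (Real.exp x)⁻¹ := by
      rw [neg_div, Real.exp_neg]
      exact inv_anti₀ (Real.exp_pos x) (Real.exp_le_exp.2 hx2)
    rw [Real.norm_eq_abs, abs_mul, abs_of_pos (Real.exp_pos _), abs_div,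
      abs_of_pos (Real.exp_pos _), div_eq_mul_inv]
    exact mul_le_mul_of_nonneg_left h3 (abs_nonneg _)
  have h2 := key.comp Filter.tendsto_neg_atBot_atTop
  have : (fun x => gaussH n (-x)) ∘ Neg.neg = gaussH n := by
    funext x; simp
  rwa [this] at h2


open Filter Set in
lemma tail_top_pos (f g : ℝ → ℝ) (hf : ∀ x, HasDerivAt f (g x) x) (a c : ℝ)
    (hac : a < c) (ha : f a = 0) (hc : 0 < f c)
    (hlim : Tendsto f atTop (nhds 0)) : ∃ z, a < z ∧ g z = 0 := by
  have hcont : Continuous f := by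
    have : Differentiable ℝ f := fun x => (hf x).differentiableAt
    exact this.continuous
  obtain ⟨R0, hR0⟩ := (eventually_atTop).1 (hlim.eventually (gt_mem_nhds hc))
  set R : ℝ := max R0 (c + 1) with hRdef
  have hcR : c < R := lt_of_lt_of_le (lt_add_one c) (le_max_right _ _)
  have haR : a < R := hac.trans hcR
  have hK : IsCompact (Icc a R) := isCompact_Icc
  obtain ⟨z, hzK, hz⟩ := hK.exists_isMaxOn (nonempty_Icc.2 haR.le) hcont.continuousOn
  have hfc_le : f c ≤ f z := hz ⟨hac.le, hcR.le⟩
  have hza : a < z := by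
    rcases lt_or_eq_of_le hzK.1 with h | h
    · exact h
    · exfalso; rw [← h, ha] at hfc_le; linarith
  have hzR : z < R := by
    rcases lt_or_eq_of_le hzK.2 with h | h
    · exact h
    · exfalso
      have : f R < f c := hR0 R (le_max_left _ _)
      rw [h] at hfc_le; linarith
  have hmem : Icc a R ∈ nhds z := Icc_mem_nhds hza hzR
  have hloc : IsLocalMax f z := hz.isLocalMax hmem
  exact ⟨z, hza, hloc.hasDerivAt_eq_zero (hf z)⟩

open Filter Set in
lemma tail_top (f g : ℝ → ℝ) (hf : ∀ x, HasDerivAt f (g x) x) (a c : ℝ)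
    (hac : a < c) (ha : f a = 0) (hc : f c ≠ 0)
    (hlim : Tendsto f atTop (nhds 0)) : ∃ z, a < z ∧ g z = 0 := by
  rcases hc.lt_or_gt with h | h
  · obtain ⟨z, hz1, hz2⟩ := tail_top_pos (fun x => -f x) (fun x => -g x)
      (fun x => (hf x).neg) a c hac (by simp [ha]) (by simpa using h)
      (by simpa using hlim.neg)
    exact ⟨z, hz1, by linarith [neg_eq_zero.1 hz2]⟩
  · exact tail_top_pos f g hf a c hac ha h hlim

open Filter Set in
lemma tail_bot (f g : ℝ → ℝ) (hf : ∀ x, HasDerivAt f (g x) x) (a c : ℝ)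
    (hac : c < a) (ha : f a = 0) (hc : f c ≠ 0)
    (hlim : Tendsto f atBot (nhds 0)) : ∃ z, z < a ∧ g z = 0 := by
  have hF : ∀ x, HasDerivAt (fun t => f (-t)) (-(g (-x))) x := by
    intro x
    have := (hf (-x)).comp x (hasDerivAt_neg x)
    simpa [mul_comm, Function.comp_def] using this
  have hlim' : Tendsto (fun t => f (-t)) atTop (nhds 0) := by
    have h2 := hlim.comp tendsto_neg_atTop_atBot
    exact h2
  obtain ⟨z, hz1, hz2⟩ := tail_top (fun t => f (-t)) (fun x => -(g (-x))) hF (-a) (-c)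
    (by linarith) (by simpa using ha) (by simpa using hc) hlim'
  exact ⟨-z, by linarith, by simpa using hz2⟩

lemma exists_gaussH_ne_top (n : ℕ) (b : ℝ) : ∃ c, b < c ∧ gaussH n c ≠ 0 := by
  obtain ⟨c, hc1, hc2⟩ :=
    (Set.Ioi_infinite b).exists_notMem_finset (hermiteR n).roots.toFinset
  refine ⟨c, hc1, ?_⟩
  have heval : (hermiteR n).eval c ≠ 0 := by
    intro h
    exact hc2 (Multiset.mem_toFinset.2 ((Polynomial.mem_roots (hermiteR_ne_zero n)).2 h))
  exact mul_ne_zero heval (Real.exp_ne_zero _)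

lemma exists_gaussH_ne_bot (n : ℕ) (b : ℝ) : ∃ c, c < b ∧ gaussH n c ≠ 0 := by
  obtain ⟨c, hc1, hc2⟩ :=
    (Set.Iio_infinite b).exists_notMem_finset (hermiteR n).roots.toFinset
  refine ⟨c, hc1, ?_⟩
  have heval : (hermiteR n).eval c ≠ 0 := by
    intro h
    exact hc2 (Multiset.mem_toFinset.2 ((Polynomial.mem_roots (hermiteR_ne_zero n)).2 h))
  exact mul_ne_zero heval (Real.exp_ne_zero _)

lemma gaussH_eq_zero_iff (n : ℕ) (x : ℝ) : gaussH n x = 0 ↔ (hermiteR n).eval x = 0 := by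
  simp [gaussH, Real.exp_ne_zero]

lemma gaussH_deriv (n : ℕ) : ∀ x, HasDerivAt (gaussH n) ((fun t => -(gaussH (n+1) t)) x) x :=
  fun x => hasDerivAt_gaussH n x

lemma upper_roots (n : ℕ) : ∀ (l' : List ℝ) (a : ℝ),
    List.Chain' (· < ·) (a :: l') → (∀ x ∈ a :: l', (hermiteR n).eval x = 0) →
    ∃ m : List ℝ, m.length = l'.length + 1 ∧ List.Chain' (· < ·) m ∧
      ∀ z ∈ m, (hermiteR (n + 1)).eval z = 0 ∧ a < z := by
  intro l'
  induction l' with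
  | nil =>
    intro a _ hroot
    obtain ⟨c, hc1, hc2⟩ := exists_gaussH_ne_top n a
    obtain ⟨z, hz1, hz2⟩ := tail_top (gaussH n) (fun t => -(gaussH (n+1) t))
      (gaussH_deriv n) a c hc1
      ((gaussH_eq_zero_iff n a).2 (hroot a (List.mem_singleton.2 rfl))) hc2
      (gaussH_tendsto_atTop n)
    refine ⟨[z], rfl, List.isChain_singleton z, ?_⟩
    intro w hw
    rw [List.mem_singleton] at hw
    subst hw
    exact ⟨(gaussH_eq_zero_iff (n+1) w).1 (by linarith [neg_eq_zero.1 hz2]), hz1⟩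
  | cons b rest ih =>
    intro a hchain hroot
    have hab : a < b := (List.isChain_cons_cons.1 hchain).1
    obtain ⟨z, hzmem, hz⟩ := exists_hasDerivAt_eq_zero hab
      (by exact (Continuous.continuousOn (by
        have : Differentiable ℝ (gaussH n) := fun x => (hasDerivAt_gaussH n x).differentiableAt
        exact this.continuous)))
      (by rw [(gaussH_eq_zero_iff n a).2 (hroot a (by simp)),
              (gaussH_eq_zero_iff n b).2 (hroot b (by simp))])
      (fun x _ => gaussH_deriv n x)
    obtain ⟨m₂, hm₂len, hm₂chain, hm₂⟩ := ih b ((List.isChain_cons_cons.1 hchain).2)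
      (fun x hx => hroot x (List.mem_cons_of_mem a hx))
    refine ⟨z :: m₂, by simp [hm₂len], ?_, ?_⟩
    · rw [List.Chain', List.isChain_cons]
      refine ⟨?_, hm₂chain⟩
      intro h hh
      have : h ∈ m₂ := List.mem_of_mem_head? hh
      have := (hm₂ h this).2
      linarith [hzmem.2]
    · intro w hw
      rcases List.mem_cons.1 hw with rfl | hw
      · exact ⟨(gaussH_eq_zero_iff (n+1) w).1 (by linarith [neg_eq_zero.1 hz]), hzmem.1⟩
      · exact ⟨(hm₂ w hw).1, hab.trans (hm₂ w hw).2⟩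

lemma hermiteR_roots_list : ∀ n : ℕ, ∃ l : List ℝ, l.length = n ∧
    List.Chain' (· < ·) l ∧ ∀ x ∈ l, (hermiteR n).eval x = 0 := by
  intro n
  induction n with
  | zero => exact ⟨[], rfl, List.isChain_nil, by simp⟩
  | succ n ih =>
    obtain ⟨l, hlen, hchain, hroot⟩ := ih
    match l, hlen with
    | [], hlen =>
      refine ⟨[0], by simp [← hlen], List.isChain_singleton 0, ?_⟩
      intro x hx
      rw [List.mem_singleton] at hx
      subst hx
      have : n = 0 := by simpa using hlen.symm
      subst this
      rw [hermiteR_eval_succ, hermiteR_zero]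
      simp
    | a :: l', hlen =>
      obtain ⟨m, hmlen, hmchain, hm⟩ := upper_roots n l' a hchain hroot
      obtain ⟨c, hc1, hc2⟩ := exists_gaussH_ne_bot n a
      obtain ⟨z, hz1, hz2⟩ := tail_bot (gaussH n) (fun t => -(gaussH (n+1) t))
        (gaussH_deriv n) a c hc1
        ((gaussH_eq_zero_iff n a).2 (hroot a (by simp))) hc2
        (gaussH_tendsto_atBot n)
      refine ⟨z :: m, ?_, ?_, ?_⟩
      · simp only [List.length_cons, hmlen]
        simp only [List.length_cons] at hlen
        omega
      · rw [List.Chain', List.isChain_cons]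
        refine ⟨?_, hmchain⟩
        intro h hh
        have := (hm h (List.mem_of_mem_head? hh)).2
        linarith
      · intro w hw
        rcases List.mem_cons.1 hw with rfl | hw
        · exact (gaussH_eq_zero_iff (n+1) w).1 (by linarith [neg_eq_zero.1 hz2])
        · exact (hm w hw).1

lemma hermiteR_card_roots (n : ℕ) : Multiset.card (hermiteR n).roots = n := by
  obtain ⟨l, hlen, hchain, hroot⟩ := hermiteR_roots_list n
  have hnodup : l.Nodup := (List.isChain_iff_pairwise.1 hchain).imp (fun h => ne_of_lt h)
  have hsub : l.toFinset ⊆ (hermiteR n).roots.toFinset := by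
    intro x hx
    rw [List.mem_toFinset] at hx
    exact Multiset.mem_toFinset.2 ((Polynomial.mem_roots (hermiteR_ne_zero n)).2 (hroot x hx))
  have h1 : n ≤ (hermiteR n).roots.toFinset.card := by
    calc n = l.toFinset.card := by rw [List.toFinset_card_of_nodup hnodup, hlen]
    _ ≤ _ := Finset.card_le_card hsub
  have h2 : (hermiteR n).roots.toFinset.card ≤ Multiset.card (hermiteR n).roots :=
    Multiset.toFinset_card_le _
  have h3 : Multiset.card (hermiteR n).roots ≤ n := by
    simpa [hermiteR_natDegree] using (hermiteR n).card_roots' 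
  omega

lemma hermiteR_eq_prod (n : ℕ) :
    ((hermiteR n).roots.map fun a => X - C a).prod = hermiteR n :=
  Polynomial.prod_multiset_X_sub_C_of_monic_of_roots_card_eq (hermiteR_monic n)
    (by rw [hermiteR_card_roots, hermiteR_natDegree])

lemma eval_prod_ne_zero (y : ℝ) (r : Multiset ℝ) (h : ∀ x ∈ r, x ≠ y) :
    Polynomial.eval y ((r.map fun a => X - C a).prod) ≠ 0 := by
  rw [Polynomial.eval_multiset_prod]
  apply Multiset.prod_ne_zero
  intro h0
  rw [Multiset.mem_map] at h0
  obtain ⟨p, hp, hp0⟩ := h0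
  rw [Multiset.mem_map] at hp
  obtain ⟨x, hx, rfl⟩ := hp
  simp only [Polynomial.eval_sub, Polynomial.eval_X, Polynomial.eval_C] at hp0
  exact h x hx (by linarith [sub_eq_zero.1 hp0])

lemma sum_identity (y : ℝ) : ∀ (r : Multiset ℝ), (∀ x ∈ r, x ≠ y) →
    (r.map (fun x => 1 / (x - y) ^ 2)).sum =
      ((Polynomial.eval y (derivative ((r.map fun a => X - C a).prod))) ^ 2
        - Polynomial.eval y ((r.map fun a => X - C a).prod) *
          Polynomial.eval y (derivative (derivative ((r.map fun a => X - C a).prod))))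
        / (Polynomial.eval y ((r.map fun a => X - C a).prod)) ^ 2 := by
  intro r
  induction r using Multiset.induction_on with
  | empty => simp
  | cons a s ih =>
    intro h
    have hay : a ≠ y := h a (Multiset.mem_cons_self a s)
    have hs : ∀ x ∈ s, x ≠ y := fun x hx => h x (Multiset.mem_cons_of_mem hx)
    have hQ : Polynomial.eval y ((s.map fun a => X - C a).prod) ≠ 0 := eval_prod_ne_zero y s hs
    have hA : y - a ≠ 0 := sub_ne_zero.2 (fun hh => hay hh.symm)
    simp only [Multiset.map_cons, Multiset.prod_cons, Multiset.sum_cons]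
    rw [ih hs]
    simp only [Polynomial.derivative_mul, Polynomial.derivative_sub, Polynomial.derivative_X,
      Polynomial.derivative_C, Polynomial.eval_mul, Polynomial.eval_add, Polynomial.eval_sub,
      Polynomial.eval_X, Polynomial.eval_C, sub_zero, one_mul, Polynomial.eval_one,
      Polynomial.derivative_one, Polynomial.derivative_zero, zero_mul, zero_add, add_zero,
      Polynomial.eval_zero, Polynomial.derivative_add]
    set Q := Polynomial.eval y ((s.map fun a => X - C a).prod)
    set Q1 := Polynomial.eval y (derivative ((s.map fun a => X - C a).prod))
    set Q2 := Polynomial.eval y (derivative (derivative ((s.map fun a => X - C a).prod)))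
    have hA' : a - y ≠ 0 := sub_ne_zero.2 hay
    field_simp
    ring

theorem stmt4 (k : ℕ) (hk : 2 ≤ k) (y : ℝ) (hy : (hermiteR (k - 1)).IsRoot y) :
    ¬ (hermiteR k).IsRoot y ∧
      ((hermiteR k).roots.map (fun x => 1 / (x - y) ^ 2)).sum = (k : ℝ) := by
  obtain ⟨m, rfl⟩ : ∃ m, k = m + 2 := ⟨k - 2, by omega⟩
  have hy1 : (hermiteR (m + 1)).eval y = 0 := hy
  have h1 : ¬ (hermiteR (m + 2)).IsRoot y := fun h =>
    hermiteR_no_common_root (m + 1) y h hy1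
  refine ⟨h1, ?_⟩
  have hroots : ∀ x ∈ (hermiteR (m + 2)).roots, x ≠ y := by
    rintro x hx rfl
    exact h1 ((Polynomial.mem_roots (hermiteR_ne_zero _)).1 hx)
  have hsum := sum_identity y (hermiteR (m + 2)).roots hroots
  rw [hermiteR_eq_prod] at hsum
  set E := (hermiteR m).eval y with hE
  have hd1 : (derivative (hermiteR (m + 2))).eval y = 0 := by
    rw [show m + 2 = (m + 1) + 1 from rfl, derivative_hermiteR]
    simp [hy1]
  have hdm : (derivative (hermiteR (m + 1))).eval y = ((m : ℝ) + 1) * E := by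
    rw [derivative_hermiteR]; simp [hE]
  have hP0 : (hermiteR (m + 2)).eval y = -(((m : ℝ) + 1) * E) := by
    rw [show m + 2 = (m + 1) + 1 from rfl, hermiteR_eval_succ, hy1, hdm]
    ring
  have hP0ne : (hermiteR (m + 2)).eval y ≠ 0 := h1
  have hMEne : ((m : ℝ) + 1) * E ≠ 0 := by
    rw [hP0] at hP0ne; simpa using hP0ne
  have hEne : E ≠ 0 := by
    intro h; apply hMEne; rw [h]; ring
  have hd2 : (derivative (derivative (hermiteR (m + 2)))).eval y =
      (((m : ℝ) + 2) * ((m : ℝ) + 1)) * E := by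
    rw [show m + 2 = (m + 1) + 1 from rfl, derivative_hermiteR (m + 1)]
    rw [Polynomial.derivative_mul, Polynomial.derivative_C, derivative_hermiteR m]
    push_cast
    simp [hE]
    ring
  rw [hsum, hd1, hd2, hP0]
  have hm1 : ((m : ℝ) + 1) ≠ 0 := by positivity
  push_cast
  field_simp
  ring
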